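/- The integer-based (DGHV-style) scheme is additively homomorphic: let p be an odd integer with p ≥ 3, and for i = 1, 2 let cᵢ = mᵢ' + p·qᵢ with qᵢ ∈ ℤ, mᵢ' ∈ ℤ and mᵢ' ≡ mᵢ (mod 2) for messages mᵢ ∈ {0,1}. If |m₁' + m₂'| < p/2, then ([c₁ + c₂]_p) mod 2 = (m₁ + m₂) mod 2. -/

import Mathlib

theorem aux_bmod_eq_self (p : ℕ) (s : ℤ) (h : 2*|s| < p) : Int.bmod s p = s := by
  have hp0 : (0:ℤ) < p := by have := abs_nonneg s; omega
  have h1 : 0 ≤ s % (p:ℤ) := Int.emod_nonneg s (by omega)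
  have h2 : s % (p:ℤ) < p := Int.emod_lt_of_pos s hp0
  obtain ⟨k, hk⟩ := Int.dvd_emod_sub_self (x := s) (m := p)
  have habs : 2*s < p ∧ -(p:ℤ) < 2*s := by
    have := le_abs_self s; have := neg_abs_le s; constructor <;> linarith
  have hk0 : 0 ≤ k := by nlinarith [habs.1, habs.2]
  have hk1 : k ≤ 1 := by nlinarith [habs.1, habs.2]
  interval_cases k
  · rw [Int.bmod_def]; split_ifs with hcond <;> omega
  · rw [Int.bmod_def]; split_ifs with hcond <;> omega

/-- The integer-based (DGHV-style) scheme is additively homomorphic: for ciphertexts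
`cᵢ = mᵢ' + p·qᵢ` with `mᵢ' ≡ mᵢ (mod 2)`, if `|m₁' + m₂'| < p/2` then the
decryption `([c₁+c₂]_p) mod 2` equals `(m₁ + m₂) mod 2`.  Here `Int.bmod x p` is the
representative of `x` modulo `p` in the symmetric interval `[-p/2, p/2)`. -/
theorem dghv_additively_homomorphic (p : ℕ) (hp_odd : Odd p) (hp : 3 ≤ p)
    (m₁ m₂ m₁' m₂' q₁ q₂ c₁ c₂ : ℤ)
    (hm₁ : m₁ = 0 ∨ m₁ = 1) (hm₂ : m₂ = 0 ∨ m₂ = 1)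
    (hm₁' : m₁' ≡ m₁ [ZMOD 2]) (hm₂' : m₂' ≡ m₂ [ZMOD 2])
    (hc₁ : c₁ = m₁' + (p : ℤ) * q₁) (hc₂ : c₂ = m₂' + (p : ℤ) * q₂)
    (hnoise : ((|m₁' + m₂'| : ℤ) : ℚ) < (p : ℚ) / 2) :
    (Int.bmod (c₁ + c₂) p) % 2 = (m₁ + m₂) % 2 := by
  have h2 : 2 * |m₁' + m₂'| < (p : ℤ) := by
    have : ((2 * |m₁' + m₂'| : ℤ) : ℚ) < (p : ℚ) := by push_cast at hnoise ⊢; linarith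
    exact_mod_cast this
  have hsum : c₁ + c₂ = (m₁' + m₂') + (p : ℤ) * (q₁ + q₂) := by rw [hc₁, hc₂]; ring
  rw [hsum, Int.add_mul_bmod_self_left, aux_bmod_eq_self p _ h2]
  exact (Int.ModEq.add hm₁' hm₂')
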